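/- Let A be a factorially closed subring of an integral domain B and S a multiplicatively closed subset of A not containing 0. Then S⁻¹A is a factorially closed subring of S⁻¹B. -/
import Mathlib


/-- If `A` is a factorially closed subring of an integral domain `B` and `S` is a
multiplicatively closed subset of `A` not containing `0`, then `S⁻¹A` is a
factorially closed subring of `S⁻¹B`.  Here `S⁻¹B` is realized as `Localization S`
and `S⁻¹A` as the set of fractions `a / s` with `a ∈ A`, `s ∈ S`, i.e. the set of
`x` with `s • x ∈ A` for some `s ∈ S`. -/
theorem stmt3 {B : Type*} [CommRing B] [IsDomain B] (A : Subring B)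
    (hFC : ∀ f g : B, f ≠ 0 → g ≠ 0 → f * g ∈ A → f ∈ A ∧ g ∈ A)
    (S : Submonoid B) (hSA : (S : Set B) ⊆ A) (hS0 : (0 : B) ∉ S) :
    ∀ x y : Localization S, x ≠ 0 → y ≠ 0 →
      (∃ a ∈ A, ∃ s ∈ S, algebraMap B (Localization S) s * (x * y)
          = algebraMap B (Localization S) a) →
      ((∃ a ∈ A, ∃ s ∈ S, algebraMap B (Localization S) s * x
          = algebraMap B (Localization S) a) ∧
       (∃ a ∈ A, ∃ s ∈ S, algebraMap B (Localization S) s * y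
          = algebraMap B (Localization S) a)) := by
  have hSne : ∀ s ∈ S, s ≠ 0 := fun s hs h => hS0 (h ▸ hs)
  intro x y hx hy ⟨a, ha, s, hs, heq⟩
  have hsurj : ∀ z : Localization S, ∃ b t, Localization.mk b t = z := fun z =>
    Localization.induction_on z fun ⟨b, t⟩ => ⟨b, t, rfl⟩
  obtain ⟨b, t, rfl⟩ := hsurj x
  obtain ⟨c, u, rfl⟩ := hsurj y
  -- extract the equation in B
  rw [← Localization.mk_one_eq_algebraMap, ← Localization.mk_one_eq_algebraMap,
    Localization.mk_mul, Localization.mk_mul, Localization.mk_eq_mk_iff,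
    Localization.r_iff_exists] at heq
  obtain ⟨v, hv⟩ := heq
  simp only [Submonoid.coe_mul, OneMemClass.coe_one, one_mul, mul_one] at hv
  -- b, c nonzero
  have hb : b ≠ 0 := by
    rintro rfl
    exact hx (by rw [Localization.mk_zero])
  have hc : c ≠ 0 := by
    rintro rfl
    exact hy (by rw [Localization.mk_zero])
  have hv0 : (v : B) ≠ 0 := hSne v v.2
  have key : (v : B) * (s * (b * c)) = (v : B) * (a * (t * u)) := by
    linear_combination hv
  have key2 : (s * b) * c = a * (t * u) := by
    have := mul_left_cancel₀ hv0 key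
    linear_combination this
  have hmem : (s * b) * c ∈ A := by
    rw [key2]
    exact A.mul_mem ha (A.mul_mem (hSA t.2) (hSA u.2))
  obtain ⟨hsb, hcA⟩ := hFC (s * b) c (mul_ne_zero (hSne s hs) hb) hc hmem
  constructor
  · refine ⟨s * b, hsb, s * t, S.mul_mem hs t.2, ?_⟩
    rw [← Localization.mk_one_eq_algebraMap, ← Localization.mk_one_eq_algebraMap,
      Localization.mk_mul, Localization.mk_eq_mk_iff, Localization.r_iff_exists]
    exact ⟨1, by push_cast; ring⟩
  · refine ⟨c, hcA, u, u.2, ?_⟩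
    rw [← Localization.mk_one_eq_algebraMap, ← Localization.mk_one_eq_algebraMap,
      Localization.mk_mul, Localization.mk_eq_mk_iff, Localization.r_iff_exists]
    exact ⟨1, by push_cast; ring⟩
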